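/- For all natural numbers x, y, z with x ≥ 2, y ≥ 2 and z ≥ 2, z = x·y if and only if there exist natural numbers u, v, w such that Q(x, u), Q(y, v), Q(x + y, w), and z + z + u + v = w, where Q(a, b) denotes the conjunction: a divides b + a, a + 1 divides b + a, Nat.log 2 b ≤ 2 · Nat.log 2 a + 1, a + 2 divides b + 2a, and a + 3 divides b + 3a (with b ≥ 1 implicit). -/
import Mathlib


/-- The predicate `Q a b` from the paper's squaring characterization:
for `a ≥ 2`, `b ≥ 1`, it holds exactly when `b = a ^ 2`. -/
def Q (a b : ℕ) : Prop :=
  a ∣ b + a ∧ a + 1 ∣ b + a ∧ Nat.log 2 b ≤ 2 * Nat.log 2 a + 1 ∧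
    a + 2 ∣ b + 2 * a ∧ a + 3 ∣ b + 3 * a

lemma Q_sq {a : ℕ} (ha : 2 ≤ a) : Q a (a ^ 2) := by
  refine ⟨⟨a + 1, by ring⟩, ⟨a, by ring⟩, ?_, ⟨a, by ring⟩, ⟨a, by ring⟩⟩
  have h1 : a < 2 ^ (Nat.log 2 a + 1) := Nat.lt_pow_succ_log_self (by norm_num) a
  have h2 : a ^ 2 < 2 ^ (2 * Nat.log 2 a + 2) := by
    have : 2 ^ (2 * Nat.log 2 a + 2) = (2 ^ (Nat.log 2 a + 1)) ^ 2 := by ring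
    nlinarith
  have := Nat.log_lt_of_lt_pow (show a ^ 2 ≠ 0 by positivity) h2
  omega

set_option maxHeartbeats 1000000 in
lemma Q_unique {a b : ℕ} (ha : 2 ≤ a) (h : Q a b) : b = a ^ 2 := by
  obtain ⟨h1, h2, h3, h4, h5⟩ := h
  have hb : 1 ≤ b := by
    rcases Nat.eq_zero_or_pos b with rfl | h
    · simp at h2
      have := Nat.le_of_dvd (by omega) h2
      omega
    · exact h
  have hb4 : b < 4 * a ^ 2 := by
    have h1' : b < 2 ^ (Nat.log 2 b + 1) := Nat.lt_pow_succ_log_self (by norm_num) b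
    have h2' : 2 ^ (Nat.log 2 b + 1) ≤ 2 ^ (2 * Nat.log 2 a + 2) :=
      Nat.pow_le_pow_right (by norm_num) (by omega)
    have h3' : 2 ^ Nat.log 2 a ≤ a := Nat.pow_log_le_self 2 (by omega)
    have h4' : 2 ^ (2 * Nat.log 2 a + 2) = 4 * (2 ^ Nat.log 2 a) ^ 2 := by ring
    have h5' : (2 ^ Nat.log 2 a) ^ 2 ≤ a ^ 2 := Nat.pow_le_pow_left h3' 2
    omega
  clear h3
  rcases lt_or_ge a 9 with h9 | h9
  · interval_cases a <;> omega
  · have H0 : (a : ℤ) ∣ (b : ℤ) - (a : ℤ) ^ 2 := by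
      obtain ⟨c, hc⟩ := h1
      have hc' : (b : ℤ) + a = a * c := by exact_mod_cast hc
      exact ⟨(c : ℤ) - 1 - a, by linear_combination hc'⟩
    have H1 : (a : ℤ) + 1 ∣ (b : ℤ) - (a : ℤ) ^ 2 := by
      obtain ⟨c, hc⟩ := h2
      have hc' : (b : ℤ) + a = (a + 1) * c := by exact_mod_cast hc
      exact ⟨(c : ℤ) - a, by linear_combination hc'⟩
    have H2 : (a : ℤ) + 2 ∣ (b : ℤ) - (a : ℤ) ^ 2 := by
      obtain ⟨c, hc⟩ := h4
      have hc' : (b : ℤ) + 2 * a = (a + 2) * c := by exact_mod_cast hc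
      exact ⟨(c : ℤ) - a, by linear_combination hc'⟩
    have H3 : (a : ℤ) + 3 ∣ (b : ℤ) - (a : ℤ) ^ 2 := by
      obtain ⟨c, hc⟩ := h5
      have hc' : (b : ℤ) + 3 * a = (a + 3) * c := by exact_mod_cast hc
      exact ⟨(c : ℤ) - a, by linear_combination hc'⟩
    have cop1 : IsCoprime (a : ℤ) ((a : ℤ) + 1) := ⟨-1, 1, by ring⟩
    have cop2 : IsCoprime ((a : ℤ) + 2) ((a : ℤ) + 3) := ⟨-1, 1, by ring⟩
    have Hab : (a : ℤ) * ((a : ℤ) + 1) ∣ (b : ℤ) - (a : ℤ) ^ 2 := cop1.mul_dvd H0 H1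
    have Hcd : ((a : ℤ) + 2) * ((a : ℤ) + 3) ∣ (b : ℤ) - (a : ℤ) ^ 2 := cop2.mul_dvd H2 H3
    obtain ⟨e, he⟩ := Hcd
    have ha9 : (9 : ℤ) ≤ (a : ℤ) := by exact_mod_cast h9
    have hblt : (b : ℤ) < 4 * (a : ℤ) ^ 2 := by exact_mod_cast hb4
    have hbge : (1 : ℤ) ≤ (b : ℤ) := by exact_mod_cast hb
    have he0 : 0 ≤ e := by
      by_contra hneg
      push_neg at hneg
      have h' : e ≤ -1 := by omega
      nlinarith [mul_le_mul_of_nonneg_left h'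
        (show (0 : ℤ) ≤ ((a : ℤ) + 2) * ((a : ℤ) + 3) by positivity)]
    have he2 : e ≤ 2 := by
      by_contra hpos
      push_neg at hpos
      have h' : (3 : ℤ) ≤ e := by omega
      nlinarith [mul_le_mul_of_nonneg_left h'
        (show (0 : ℤ) ≤ ((a : ℤ) + 2) * ((a : ℤ) + 3) by positivity)]
    interval_cases e
    · have : (b : ℤ) = (a : ℤ) ^ 2 := by linarith [he]
      exact_mod_cast this
    · exfalso
      have hd : (a : ℤ) * ((a : ℤ) + 1) ∣ (4 * (a : ℤ) + 6) := by
        obtain ⟨f, hf⟩ := Hab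
        exact ⟨f - 1, by linear_combination hf - he⟩
      have := Int.le_of_dvd (by linarith) hd
      nlinarith
    · exfalso
      have hd : (a : ℤ) * ((a : ℤ) + 1) ∣ (8 * (a : ℤ) + 12) := by
        obtain ⟨f, hf⟩ := Hab
        exact ⟨f - 2, by linear_combination hf - he⟩
      have := Int.le_of_dvd (by linarith) hd
      nlinarith

theorem mul_diophantine (x y z : ℕ) (hx : 2 ≤ x) (hy : 2 ≤ y) (hz : 2 ≤ z) :
    z = x * y ↔
      ∃ u v w : ℕ, Q x u ∧ Q y v ∧ Q (x + y) w ∧ z + z + u + v = w := by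
  constructor
  · rintro rfl
    exact ⟨x ^ 2, y ^ 2, (x + y) ^ 2, Q_sq hx, Q_sq hy, Q_sq (by omega), by ring⟩
  · rintro ⟨u, v, w, hu, hv, hw, hsum⟩
    have hu' := Q_unique hx hu
    have hv' := Q_unique hy hv
    have hw' := Q_unique (show 2 ≤ x + y by omega) hw
    subst hu' hv' hw'
    have : z + z + x ^ 2 + y ^ 2 = x ^ 2 + 2 * (x * y) + y ^ 2 := by rw [hsum]; ring
    omega
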